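/- Define f(t) = −2(3t²u²(t) − 2v(t) + t)/(t + v(t))² for t ∈ (0,∞), where u(t) = (t-1)/(t·log t) and v(t) = ∫₀ᵗ τu²(τ) dτ. Then f(1) < 0. -/

import Mathlib

open Real MeasureTheory Filter Set
open scoped Topology

/-- u(t) = (t-1)/(t·log t) with the removable singularity u(1) = 1. -/
noncomputable def u (t : ℝ) : ℝ := if t = 1 then 1 else (t - 1) / (t * Real.log t)

/-- v(t) = ∫₀ᵗ τ·u(τ)² dτ. -/
noncomputable def v (t : ℝ) : ℝ := ∫ τ in Set.Ioo (0:ℝ) t, τ * u τ ^ 2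

/-- f(t) = −2(3t²u²(t) − 2v(t) + t)/(t + v(t))². -/
noncomputable def f (t : ℝ) : ℝ :=
  -2 * (3 * t ^ 2 * u t ^ 2 - 2 * v t + t) / (t + v t) ^ 2

/-- key log inequality: for 0 < x ≤ 1, log x ≤ 2(x-1)/(x+1). -/
lemma key_log {x : ℝ} (hx : 0 < x) (hx1 : x ≤ 1) : Real.log x ≤ 2 * (x - 1) / (x + 1) := by
  rcases eq_or_lt_of_le hx1 with h | h
  · subst h; simp
  set φ : ℝ → ℝ := fun y => 2 * (y - 1) / (y + 1) - Real.log y with hφ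
  have hder : ∀ y ∈ Set.Ioo x 1, HasDerivAt φ (4 / (y + 1) ^ 2 - 1 / y) y := by
    intro y hy
    have hy0 : 0 < y := lt_trans hx hy.1
    have h1 : HasDerivAt (fun y : ℝ => 2 * (y - 1) / (y + 1)) (4 / (y + 1) ^ 2) y := by
      have := (((hasDerivAt_id y).sub_const 1).const_mul 2).div
        ((hasDerivAt_id y).add_const 1) (by positivity)
      refine this.congr_deriv ?_
      simp only [id]
      ring
    have h2 : HasDerivAt Real.log (1 / y) y := by
      simpa [one_div] using Real.hasDerivAt_log hy0.ne'
    exact h1.sub h2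
  have hcont : ContinuousOn φ (Set.Icc x 1) := by
    intro y hy
    have hy0 : 0 < y := lt_of_lt_of_le hx hy.1
    apply ContinuousWithinAt.sub
    · exact (((continuous_const.mul (continuous_id.sub continuous_const)).continuousWithinAt).div
        ((continuous_id.add continuous_const).continuousWithinAt) (by positivity))
    · exact (Real.continuousAt_log hy0.ne').continuousWithinAt
  have hanti : AntitoneOn φ (Set.Icc x 1) := by
    apply antitoneOn_of_deriv_nonpos (convex_Icc x 1) hcont
    · intro y hy
      rw [interior_Icc] at hy
      exact ((hder y hy).differentiableAt).differentiableWithinAt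
    · intro y hy
      rw [interior_Icc] at hy
      have hy0 : 0 < y := lt_trans hx hy.1
      rw [(hder y hy).deriv]
      rw [sub_nonpos, div_le_div_iff₀ (by positivity) hy0]
      nlinarith [sq_nonneg (y - 1)]
  have h0 := hanti (Set.left_mem_Icc.2 h.le) (Set.right_mem_Icc.2 h.le) h.le
  simp only [hφ, Real.log_one] at h0
  linarith

lemma u_measurable : Measurable u := by
  unfold u
  exact Measurable.ite (measurableSet_singleton 1) measurable_const
    ((measurable_id.sub measurable_const).div (measurable_id.mul Real.measurable_log))

lemma g_eq {τ : ℝ} (h0 : 0 < τ) (h1 : τ < 1) :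
    τ * u τ ^ 2 = (τ - 1) ^ 2 / (τ * Real.log τ ^ 2) := by
  have hlog : Real.log τ < 0 := Real.log_neg h0 h1
  have h0' : τ ≠ 0 := h0.ne'
  have hlog' : Real.log τ ≠ 0 := hlog.ne
  rw [u, if_neg h1.ne]
  field_simp

set_option maxHeartbeats 2000000 in
theorem f_one_neg : f 1 < 0 := by
  set c : ℝ := Real.exp (-2) with hc
  have hc0 : 0 < c := Real.exp_pos _
  have hc1 : c < 1 := Real.exp_lt_one_iff.2 (by norm_num)
  have hlogc : Real.log c = -2 := Real.log_exp _
  set g : ℝ → ℝ := fun τ => τ * u τ ^ 2 with hg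
  have hgmeas : Measurable g := measurable_id.mul (u_measurable.pow_const 2)
  have hgnonneg : ∀ x ∈ Set.Ioo (0:ℝ) 1, 0 ≤ g x := by
    intro x hx
    have := hx.1
    simp only [hg]
    positivity
  -- Part 1 : the integral over (0, c)
  set F₁ : ℝ → ℝ := fun τ => (-Real.log τ)⁻¹ with hF₁
  set g₁ : ℝ → ℝ := fun τ => (τ * Real.log τ ^ 2)⁻¹ with hg₁
  have hF₁der : ∀ x ∈ Set.Ioo (0:ℝ) c, HasDerivAt F₁ (g₁ x) x := by
    intro x hx
    have hx0 : 0 < x := hx.1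
    have hlx : Real.log x < 0 := Real.log_neg hx0 (lt_trans hx.2 hc1)
    have h := ((Real.hasDerivAt_log hx0.ne').neg).inv (by simpa using hlx.ne)
    refine h.congr_deriv ?_
    simp only [hg₁, Pi.neg_apply]
    have hx0' : x ≠ 0 := hx0.ne'
    have hlx' : Real.log x ≠ 0 := hlx.ne
    field_simp
  have htend0 : Tendsto F₁ (𝓝[>] (0:ℝ)) (𝓝 0) := by
    have : Tendsto (fun τ : ℝ => -Real.log τ) (𝓝[>] (0:ℝ)) atTop :=
      tendsto_neg_atBot_atTop.comp Real.tendsto_log_nhdsGT_zero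
    exact this.inv_tendsto_atTop
  have hF₁cont : ContinuousOn F₁ (Set.Icc 0 c) := by
    intro x hx
    rcases eq_or_lt_of_le hx.1 with h | h
    · subst h
      have hIci : Tendsto F₁ (𝓝[Set.Ici (0:ℝ)] 0) (𝓝 0) := by
        rw [show Set.Ici (0:ℝ) = {0} ∪ Set.Ioi 0 by
              ext y; simp [le_iff_lt_or_eq, or_comm, eq_comm],
          nhdsWithin_union, nhdsWithin_singleton, tendsto_sup]
        refine ⟨?_, htend0⟩
        have : F₁ 0 = 0 := by simp [hF₁]
        rw [tendsto_pure_left]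
        intro s hs
        simpa [this] using mem_of_mem_nhds hs
      have h0 : ContinuousWithinAt F₁ (Set.Ici 0) 0 := by
        rw [ContinuousWithinAt, show F₁ 0 = 0 by simp [hF₁]]
        exact hIci
      exact h0.mono fun y hy => hy.1
    · have hlx : Real.log x < 0 := Real.log_neg h (lt_of_le_of_lt hx.2 hc1)
      exact ((Real.continuousAt_log h.ne').neg.continuousWithinAt).inv₀ (by simpa using hlx.ne)
  have hg₁nonneg : ∀ x ∈ Set.Ioo (0:ℝ) c, 0 ≤ g₁ x := by
    intro x hx
    have := hx.1
    simp only [hg₁]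
    positivity
  have hg₁intIoc : IntegrableOn g₁ (Set.Ioc 0 c) :=
    intervalIntegral.integrableOn_deriv_of_nonneg hF₁cont hF₁der hg₁nonneg
  have hg₁int : IntegrableOn g₁ (Set.Ioo 0 c) := hg₁intIoc.mono_set Set.Ioo_subset_Ioc_self
  have hF₁c : F₁ c = 1/2 := by simp [hF₁, hlogc]
  have hint₁val : ∫ x in Set.Ioo (0:ℝ) c, g₁ x = 1/2 := by
    have hii : IntervalIntegrable g₁ volume 0 c := by
      rw [intervalIntegrable_iff_integrableOn_Ioc_of_le hc0.le]
      exact hg₁intIoc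
    have hcend : Tendsto F₁ (𝓝[<] c) (𝓝 (F₁ c)) := by
      have hlc : Real.log c < 0 := by rw [hlogc]; norm_num
      have : ContinuousAt F₁ c :=
        ((Real.continuousAt_log hc0.ne').neg).inv₀ (by simpa using hlc.ne)
      exact this.continuousWithinAt.tendsto
    have := intervalIntegral.integral_eq_sub_of_hasDerivAt_of_tendsto hc0 hF₁der hii htend0 hcend
    rw [intervalIntegral.integral_of_le hc0.le, integral_Ioc_eq_integral_Ioo] at this
    rw [this, hF₁c]
    ring
  -- g ≤ g₁ on (0, c)
  have hbound₁ : ∀ x ∈ Set.Ioo (0:ℝ) c, g x ≤ g₁ x := by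
    intro x hx
    have hx0 : 0 < x := hx.1
    have hx1 : x < 1 := lt_trans hx.2 hc1
    have hlx : Real.log x < 0 := Real.log_neg hx0 hx1
    have hl2 : 0 < Real.log x ^ 2 := by nlinarith [mul_pos (neg_pos.2 hlx) (neg_pos.2 hlx)]
    have hD : 0 < x * Real.log x ^ 2 := mul_pos hx0 hl2
    simp only [hg, hg₁]
    rw [g_eq hx0 hx1, inv_eq_one_div, div_le_div_iff₀ hD hD]
    have h1' : (x - 1) ^ 2 ≤ 1 := by nlinarith
    nlinarith [mul_le_mul_of_nonneg_right h1' hD.le]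
  have hgint₁ : IntegrableOn g (Set.Ioo 0 c) := by
    apply Integrable.mono' hg₁int (hgmeas.aestronglyMeasurable.restrict)
    rw [ae_restrict_iff' measurableSet_Ioo]
    refine ae_of_all _ fun x hx => ?_
    rw [Real.norm_eq_abs, abs_of_nonneg (hgnonneg x ⟨hx.1, lt_trans hx.2 hc1⟩)]
    exact hbound₁ x hx
  have hint₁ : ∫ x in Set.Ioo (0:ℝ) c, g x ≤ 1/2 := by
    rw [← hint₁val]
    exact setIntegral_mono_on hgint₁ hg₁int measurableSet_Ioo hbound₁
  -- Part 2 : the integral over [c, 1)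
  set h₂ : ℝ → ℝ := fun τ => (1 + τ) ^ 2 / (4 * τ) with hh₂
  set F₂ : ℝ → ℝ := fun τ => Real.log τ / 4 + τ / 2 + τ ^ 2 / 8 with hF₂
  have hh₂cont : ContinuousOn h₂ (Set.Icc c 1) := by
    apply ContinuousOn.div
    · fun_prop
    · fun_prop
    · intro x hx
      have : 0 < x := lt_of_lt_of_le hc0 hx.1
      positivity
  have hF₂der : ∀ x ∈ Set.Ioo c 1, HasDerivAt F₂ (h₂ x) x := by
    intro x hx
    have hx0 : 0 < x := lt_trans hc0 hx.1
    have h1 := (((Real.hasDerivAt_log hx0.ne').div_const 4).add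
        ((hasDerivAt_id x).div_const 2)).add ((hasDerivAt_pow 2 x).div_const 8)
    refine h1.congr_deriv ?_
    simp only [hh₂]
    push_cast
    field_simp
    ring
  have hF₂cont : ContinuousOn F₂ (Set.Icc c 1) := by
    apply ContinuousOn.add
    apply ContinuousOn.add
    · exact ContinuousOn.div_const
        (Real.continuousOn_log.mono fun x hx => (lt_of_lt_of_le hc0 hx.1).ne') 4
    · fun_prop
    · fun_prop
  have hh₂int : IntegrableOn h₂ (Set.Icc c 1) := hh₂cont.integrableOn_compact isCompact_Icc
  have hint₂val : ∫ x in Set.Ico c 1, h₂ x = 9/8 - c/2 - c^2/8 := by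
    have hii : IntervalIntegrable h₂ volume c 1 := by
      rw [intervalIntegrable_iff_integrableOn_Icc_of_le hc1.le]
      exact hh₂int
    have := intervalIntegral.integral_eq_sub_of_hasDerivAt_of_le hc1.le hF₂cont hF₂der hii
    rw [intervalIntegral.integral_of_le hc1.le, integral_Ioc_eq_integral_Ioo] at this
    rw [integral_Ico_eq_integral_Ioo, this]
    simp only [hF₂, Real.log_one, hlogc]
    ring
  have hbound₂ : ∀ x ∈ Set.Ico c 1, g x ≤ h₂ x := by
    intro x hx
    have hx0 : 0 < x := lt_of_lt_of_le hc0 hx.1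
    have hx1 : x < 1 := hx.2
    have hlx : Real.log x < 0 := Real.log_neg hx0 hx1
    have hk := key_log hx0 hx1.le
    have hk' : Real.log x * (x + 1) ≤ 2 * (x - 1) :=
      (le_div_iff₀ (by positivity : (0:ℝ) < x + 1)).1 hk
    have hA : 2 * (1 - x) ≤ -((x + 1) * Real.log x) := by nlinarith [hk']
    have hA0 : (0:ℝ) ≤ 2 * (1 - x) := by linarith
    have hsq : (2 * (1 - x)) * (2 * (1 - x)) ≤
        (-((x + 1) * Real.log x)) * (-((x + 1) * Real.log x)) :=
      mul_self_le_mul_self hA0 hA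
    have hl2 : 0 < Real.log x ^ 2 := by nlinarith [mul_pos (neg_pos.2 hlx) (neg_pos.2 hlx)]
    have hD : 0 < x * Real.log x ^ 2 := mul_pos hx0 hl2
    simp only [hg, hh₂]
    rw [g_eq hx0 hx1, div_le_div_iff₀ hD (by positivity)]
    nlinarith
  have hgint₂ : IntegrableOn g (Set.Ico c 1) := by
    apply Integrable.mono' (hh₂int.mono_set Set.Ico_subset_Icc_self)
      (hgmeas.aestronglyMeasurable.restrict)
    rw [ae_restrict_iff' measurableSet_Ico]
    refine ae_of_all _ fun x hx => ?_
    rw [Real.norm_eq_abs, abs_of_nonneg (hgnonneg x ⟨lt_of_lt_of_le hc0 hx.1, hx.2⟩)]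
    exact hbound₂ x hx
  have hint₂ : ∫ x in Set.Ico c 1, g x ≤ 9/8 := by
    calc ∫ x in Set.Ico c 1, g x ≤ ∫ x in Set.Ico c 1, h₂ x :=
          setIntegral_mono_on hgint₂ (hh₂int.mono_set Set.Ico_subset_Icc_self)
            measurableSet_Ico hbound₂
      _ = 9/8 - c/2 - c^2/8 := hint₂val
      _ ≤ 9/8 := by nlinarith
  -- combine
  have hsplit : Set.Ioo (0:ℝ) 1 = Set.Ioo 0 c ∪ Set.Ico c 1 :=
    (Set.Ioo_union_Ico_eq_Ioo hc0 hc1.le).symm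
  have hdisj : Disjoint (Set.Ioo (0:ℝ) c) (Set.Ico c 1) :=
    Set.Ico_disjoint_Ico_same.mono_left Set.Ioo_subset_Ico_self
  have hv1 : v 1 = (∫ x in Set.Ioo (0:ℝ) c, g x) + ∫ x in Set.Ico c 1, g x := by
    rw [v, ← hg, hsplit]
    exact setIntegral_union hdisj measurableSet_Ico hgint₁ hgint₂
  have hvle : v 1 ≤ 13/8 := by
    rw [hv1]; linarith
  have hvnonneg : 0 ≤ v 1 := by
    rw [v]
    exact setIntegral_nonneg measurableSet_Ioo fun x hx => hgnonneg x hx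
  have hu1 : u 1 = 1 := by simp [u]
  rw [f, hu1]
  apply div_neg_of_neg_of_pos
  · nlinarith
  · nlinarith
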